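/- Proposition 2: the fixed point of the relaxed Bellman operator is a pointwise upper bound on the fixed point of the standard Bellman operator. Suppose S is the complete metric space of bounded measurable functions on X × U with the sup metric, F and F̂ map S into S (all the defining integrals existing), q* ∈ S satisfies q* = Fq*, and q̂ ∈ S satisfies q̂ = F̂q̂. Then q*(x,u) ≤ q̂(x,u) for all (x,u) ∈ X × U. -/

import Mathlib

open MeasureTheory

/-- Proposition 2: the fixed point of the relaxed Bellman operator `F̂` is a
pointwise upper bound on the fixed point of the standard Bellman operator `F`,
on the space of bounded measurable functions on `X × U`. -/
theorem fixed_point_relaxed_ge_fixed_point_standard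
    {X Ξ U : Type*} [MeasurableSpace X] [MeasurableSpace Ξ] [MeasurableSpace U]
    [Nonempty U]
    (μ : Measure Ξ) [IsProbabilityMeasure μ]
    (f : X → U → Ξ → X) (ℓ : X × U → ℝ) (γ : ℝ) (hγ : γ ∈ Set.Ioo (0 : ℝ) 1)
    (hℓb : ∃ M, ∀ p, |ℓ p| ≤ M) (hℓm : Measurable ℓ)
    -- `F` and `F̂` map the bounded measurable functions into themselves,
    -- all the defining integrals existing
    (hmaps : ∀ q : X × U → ℝ, (∃ M, ∀ p, |q p| ≤ M) → Measurable q →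
      (∀ x u w, Integrable (fun ξ => q (f x u ξ, w)) μ) ∧
      (∀ x u, Integrable (fun ξ => ⨅ w, q (f x u ξ, w)) μ) ∧
      (∃ M, ∀ p : X × U,
        |ℓ p + γ * ∫ ξ, (⨅ w, q (f p.1 p.2 ξ, w)) ∂μ| ≤ M) ∧
      Measurable (fun p : X × U =>
        ℓ p + γ * ∫ ξ, (⨅ w, q (f p.1 p.2 ξ, w)) ∂μ) ∧
      (∃ M, ∀ p : X × U,
        |ℓ p + γ * ⨅ w, ∫ ξ, q (f p.1 p.2 ξ, w) ∂μ| ≤ M) ∧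
      Measurable (fun p : X × U =>
        ℓ p + γ * ⨅ w, ∫ ξ, q (f p.1 p.2 ξ, w) ∂μ))
    -- `q*` is a bounded measurable fixed point of `F`
    (qstar : X × U → ℝ) (hqsb : ∃ M, ∀ p, |qstar p| ≤ M) (hqsm : Measurable qstar)
    (hqsfix : ∀ p : X × U,
      qstar p = ℓ p + γ * ∫ ξ, (⨅ w, qstar (f p.1 p.2 ξ, w)) ∂μ)
    -- `q̂` is a bounded measurable fixed point of `F̂`
    (qhat : X × U → ℝ) (hqhb : ∃ M, ∀ p, |qhat p| ≤ M) (hqhm : Measurable qhat)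
    (hqhfix : ∀ p : X × U,
      qhat p = ℓ p + γ * ⨅ w, ∫ ξ, qhat (f p.1 p.2 ξ, w) ∂μ) :
    ∀ p : X × U, qstar p ≤ qhat p := by
  intro p0
  obtain ⟨hγ0, hγ1⟩ := hγ
  obtain ⟨Ms, hMs⟩ := hqsb
  obtain ⟨Mh, hMh⟩ := hqhb
  obtain ⟨hints1, hints2, -⟩ := hmaps qstar ⟨Ms, hMs⟩ hqsm
  obtain ⟨hinth1, -⟩ := hmaps qhat ⟨Mh, hMh⟩ hqhm
  set D : ℝ := sSup (Set.range fun p : X × U => qstar p - qhat p) with hD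
  have hne : (Set.range fun p : X × U => qstar p - qhat p).Nonempty :=
    ⟨qstar p0 - qhat p0, p0, rfl⟩
  have hbdd : BddAbove (Set.range fun p : X × U => qstar p - qhat p) := by
    refine ⟨Ms + Mh, ?_⟩
    rintro _ ⟨p, rfl⟩
    have h1 := abs_le.1 (hMs p)
    have h2 := abs_le.1 (hMh p)
    dsimp only
    linarith [h1.2, h2.1]
  have hbelow_s : ∀ y : X, BddBelow (Set.range fun w : U => qstar (y, w)) := by
    intro y
    refine ⟨-Ms, ?_⟩
    rintro _ ⟨w, rfl⟩
    exact (abs_le.1 (hMs (y, w))).1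
  have key : ∀ p : X × U, qstar p - qhat p ≤ γ * D := by
    intro p
    rw [hqsfix p, hqhfix p]
    have hA : (∫ ξ, (⨅ w, qstar (f p.1 p.2 ξ, w)) ∂μ)
        ≤ (⨅ w, ∫ ξ, qhat (f p.1 p.2 ξ, w) ∂μ) + D := by
      rw [← sub_le_iff_le_add]
      refine le_ciInf fun w => ?_
      rw [sub_le_iff_le_add]
      have hmono : (∫ ξ, (⨅ w, qstar (f p.1 p.2 ξ, w)) ∂μ)
          ≤ ∫ ξ, (qhat (f p.1 p.2 ξ, w) + D) ∂μ := by
        refine integral_mono (hints2 p.1 p.2) ((hinth1 p.1 p.2 w).add (integrable_const D))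
          fun ξ => ?_
        have h1 : (⨅ w', qstar (f p.1 p.2 ξ, w')) ≤ qstar (f p.1 p.2 ξ, w) :=
          ciInf_le (hbelow_s _) w
        have h2 : qstar (f p.1 p.2 ξ, w) - qhat (f p.1 p.2 ξ, w) ≤ D :=
          le_csSup hbdd ⟨(f p.1 p.2 ξ, w), rfl⟩
        simpa using h1.trans (by linarith)
      rwa [integral_add (hinth1 p.1 p.2 w) (integrable_const D), integral_const,
        probReal_univ, one_smul] at hmono
    have := mul_le_mul_of_nonneg_left (by linarith : (∫ ξ, (⨅ w, qstar (f p.1 p.2 ξ, w)) ∂μ)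
        - (⨅ w, ∫ ξ, qhat (f p.1 p.2 ξ, w) ∂μ) ≤ D) (le_of_lt hγ0)
    linarith [this]
  have hDle : D ≤ γ * D := by
    refine csSup_le hne ?_
    rintro _ ⟨p, rfl⟩
    exact key p
  have hD0 : D ≤ 0 := by nlinarith
  have := le_csSup hbdd ⟨p0, rfl⟩
  simp only [← hD] at this
  linarith
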